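/- If G is a graph on v vertices (v even) with α(G) = v/2, then the number of independent sets of size v/2 in G is at most 2^{v/2}. -/

import Mathlib

open Finset

/-- A fractional independence weighting of a graph. -/
def IsFIW {V : Type*} (G : SimpleGraph V) (φ : V → ℝ) : Prop :=
  (∀ v, 0 ≤ φ v ∧ φ v ≤ 1) ∧ ∀ u w, G.Adj u w → φ u + φ w ≤ 1

/-- The fractional independence number of a graph. -/
noncomputable def fracIndepNum {V : Type*} [Fintype V] (G : SimpleGraph V) : ℝ :=
  sSup {s : ℝ | ∃ φ : V → ℝ, IsFIW G φ ∧ s = ∑ v, φ v}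

/-- An independent set of a graph. -/
def IsIndepSet {V : Type*} (G : SimpleGraph V) (s : Set V) : Prop :=
  s.Pairwise fun u w => ¬ G.Adj u w

/-- The independence number of a graph. -/
noncomputable def indepNum {V : Type*} [Fintype V] (G : SimpleGraph V) : ℕ :=
  sSup {n : ℕ | ∃ s : Finset V, IsIndepSet G ↑s ∧ s.card = n}

lemma indep_card_le {V : Type*} [Fintype V] (G : SimpleGraph V) (s : Finset V)
    (hs : IsIndepSet G ↑s) : s.card ≤ indepNum G := by
  apply le_csSup
  · exact ⟨Fintype.card V, fun n ⟨t, _, hc⟩ => hc ▸ (Finset.card_le_univ t).trans_eq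
      Finset.card_univ⟩
  · exact ⟨s, hs, rfl⟩

/-- If `G` has `v` vertices (`v` even) and `α(G) = v/2`, then `G` has at most `2^{v/2}`
independent sets of size `v/2`. -/
theorem stmt_8 {V : Type*} [Fintype V] (G : SimpleGraph V)
    (hv : Even (Fintype.card V)) (hα : indepNum G = Fintype.card V / 2) :
    Nat.card {s : Finset V // s.card = Fintype.card V / 2 ∧ IsIndepSet G ↑s} ≤
      2 ^ (Fintype.card V / 2) := by
  classical
  set k := Fintype.card V / 2 with hk
  -- obtain a maximum independent set A of size k
  have hmem : indepNum G ∈ {n : ℕ | ∃ s : Finset V, IsIndepSet G ↑s ∧ s.card = n} := by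
    apply Nat.sSup_mem
    · exact ⟨0, ∅, by simp [IsIndepSet], by simp⟩
    · exact ⟨Fintype.card V, fun n ⟨t, _, hc⟩ => hc ▸ (Finset.card_le_univ t).trans_eq
        Finset.card_univ⟩
  obtain ⟨A, hAindep, hAcard⟩ := hmem
  rw [hα] at hAcard
  have hAc : Aᶜ.card = k := by
    rw [Finset.card_compl, hAcard]
    obtain ⟨m, hm⟩ := hv
    omega
  -- main injectivity lemma
  have key : ∀ s t : Finset V, s.card = k → IsIndepSet G ↑s → t.card = k → IsIndepSet G ↑t →
      s \ A = t \ A → s = t := by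
    intro s t hsc hsi htc hti hst
    have hunion : IsIndepSet G ↑(s ∪ t) := by
      intro a ha b hb hab
      rw [Finset.coe_union] at ha hb
      have inA : ∀ x, x ∈ (↑s : Set V) ∪ ↑t → x ∉ s ∨ x ∉ t → x ∈ A := by
        intro x hx hxor
        by_contra hxA
        rcases hx with hx | hx
        · have : x ∈ s \ A := Finset.mem_sdiff.2 ⟨hx, hxA⟩
          rw [hst] at this
          have := (Finset.mem_sdiff.1 this).1
          rcases hxor with h | h
          · exact h hx
          · exact h this
        · have : x ∈ t \ A := Finset.mem_sdiff.2 ⟨hx, hxA⟩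
          rw [← hst] at this
          have := (Finset.mem_sdiff.1 this).1
          rcases hxor with h | h
          · exact h this
          · exact h hx
      by_cases has : a ∈ s
      · by_cases hbs : b ∈ s
        · exact hsi has hbs hab
        · -- b ∈ t \ s
          have hbt : b ∈ t := by
            rcases hb with h | h
            · exact absurd h hbs
            · exact h
          by_cases hat : a ∈ t
          · exact hti hat hbt hab
          · have haA : a ∈ A := inA a (Or.inl has) (Or.inr hat)
            have hbA : b ∈ A := inA b (Or.inr hbt) (Or.inl hbs)
            exact hAindep haA hbA hab
      · have hat : a ∈ t := by
          rcases ha with h | h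
          · exact absurd h has
          · exact h
        by_cases hbt : b ∈ t
        · exact hti hat hbt hab
        · have hbs : b ∈ s := by
            rcases hb with h | h
            · exact h
            · exact absurd h hbt
          have haA : a ∈ A := inA a (Or.inr hat) (Or.inl has)
          have hbA : b ∈ A := inA b (Or.inl hbs) (Or.inr hbt)
          exact hAindep haA hbA hab
    have hle : (s ∪ t).card ≤ k := hα ▸ indep_card_le G (s ∪ t) hunion
    have heq : s ∪ t = s := by
      exact (Finset.eq_of_subset_of_card_le (Finset.subset_union_left : s ⊆ s ∪ t) (by omega)).symm
    have hts : t ⊆ s := heq ▸ Finset.subset_union_right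
    exact (Finset.eq_of_subset_of_card_le hts (by omega)).symm
  -- counting
  rw [Nat.card_eq_fintype_card, Fintype.card_subtype]
  calc (Finset.univ.filter fun s : Finset V =>
        s.card = Fintype.card V / 2 ∧ IsIndepSet G ↑s).card
      ≤ Aᶜ.powerset.card := by
        apply Finset.card_le_card_of_injOn (fun s => s \ A)
        · intro s hs
          rw [Finset.mem_coe, Finset.mem_powerset]
          intro x hx
          rw [Finset.mem_compl]
          exact (Finset.mem_sdiff.1 hx).2
        · intro s hs t ht h
          simp only [Finset.mem_coe, Finset.mem_filter] at hs ht
          exact key s t hs.2.1 hs.2.2 ht.2.1 ht.2.2 h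
    _ = 2 ^ k := by rw [Finset.card_powerset, hAc]
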